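/- The infimum over all triples (β, s, z) ∈ ℝᵖ × ℝᵖ × ℝᵖ of (1/2)‖y − Xβ‖₂² + λ0·Σ_{i=1}^p z_i + λ2·Σ_{i=1}^p s_i subject to β_i² ≤ s_i·z_i, −M·z_i ≤ β_i ≤ M·z_i, z_i ∈ [0,1], and s_i ≥ 0 for every i ∈ [p], is equal to V_PR(M) = inf{F(β) : β ∈ ℝᵖ, ‖β‖∞ ≤ M}. -/

import Mathlib

/-- The reverse Huber function: `B(t) = |t|` for `|t| ≤ 1` and `B(t) = (t² + 1)/2` otherwise. -/
noncomputable def revHuber (t : ℝ) : ℝ := if |t| ≤ 1 then |t| else (t ^ 2 + 1) / 2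

/-- The penalty `ψ(β; λ0, λ2, M)`. -/
noncomputable def psi (l0 l2 M b : ℝ) : ℝ :=
  if Real.sqrt (l0 / l2) ≤ M then 2 * l0 * revHuber (b * Real.sqrt (l2 / l0))
  else (l0 / M + l2 * M) * |b|

/-- The objective `F(β)` of the reduced relaxation. -/
noncomputable def Fobj (n p : ℕ) (X : Matrix (Fin n) (Fin p) ℝ) (y : Fin n → ℝ)
    (l0 l2 M : ℝ) (β : Fin p → ℝ) : ℝ :=
  (1 / 2) * ∑ j, (y j - ∑ i, X j i * β i) ^ 2 + ∑ i, psi l0 l2 M (β i)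

lemma psi_nonneg (l0 l2 M b : ℝ) (hl0 : 0 < l0) (hl2 : 0 < l2) (hM : 0 < M) :
    0 ≤ psi l0 l2 M b := by
  unfold psi revHuber
  split_ifs <;> positivity

lemma keyA (l0 l2 M b s z : ℝ) (hl0 : 0 < l0) (hl2 : 0 < l2) (hM : 0 < M)
    (h1 : b ^ 2 ≤ s * z) (h2l : -(M * z) ≤ b) (h2r : b ≤ M * z)
    (h3 : 0 ≤ z) (h4 : z ≤ 1) (h5 : 0 ≤ s) :
    psi l0 l2 M b ≤ l0 * z + l2 * s := by
  set u := Real.sqrt (l0 / l2) with hu_def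
  have hu : 0 < u := Real.sqrt_pos.mpr (by positivity)
  have hu2 : u ^ 2 = l0 / l2 := Real.sq_sqrt (by positivity)
  have hl0eq : l0 = l2 * u ^ 2 := by rw [hu2]; field_simp
  have hinv : Real.sqrt (l2 / l0) = u⁻¹ := by
    rw [hu_def, ← Real.sqrt_inv, inv_div]
  have hcu : Real.sqrt (l0 / l2) = u := hu_def.symm
  clear_value u
  clear hu_def hu2
  have hab : |b| ≤ M * z := abs_le.mpr ⟨h2l, h2r⟩
  have hsq : |b| ^ 2 = b ^ 2 := sq_abs b
  unfold psi
  rw [hinv, hcu]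
  split_ifs with h6
  · unfold revHuber
    have habs : |b * u⁻¹| = |b| * u⁻¹ := by
      rw [abs_mul, abs_inv, abs_of_pos hu]
    rw [habs]
    split_ifs with h7
    · -- |b| ≤ u
      rcases h3.eq_or_lt with hz | hz
      · have hb0 : b = 0 := by
          have : |b| ≤ 0 := by rw [← hz] at hab; simpa using hab
          simpa using abs_nonpos_iff.mp this
        subst hb0
        simp only [abs_zero, zero_mul, mul_zero]
        positivity
      · have key : 2 * u * |b| ≤ u ^ 2 * z + s := by
          nlinarith [sq_nonneg (u * z - |b|), hz, h1, hsq, hu]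
        have e : 2 * l0 * (|b| * u⁻¹) = l2 * (2 * u * |b|) := by
          rw [hl0eq]; field_simp
        rw [e, hl0eq]
        have := mul_le_mul_of_nonneg_left key hl2.le
        linarith
    · -- |b| > u
      push_neg at h7
      have hbgt : u < |b| := by
        have h := mul_lt_mul_of_pos_right h7 hu
        rwa [one_mul, mul_assoc, inv_mul_cancel₀ hu.ne', mul_one] at h
      have hb2 : u ^ 2 < b ^ 2 := by nlinarith [hsq, hbgt, hu, abs_nonneg b]
      have hz : 0 < z := by
        rcases h3.eq_or_lt with hz | hz
        · exfalso
          have : |b| ≤ 0 := by rw [← hz] at hab; simpa using hab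
          have : b = 0 := abs_nonpos_iff.mp this
          nlinarith [hb2, hu]
        · exact hz
      have t : 0 ≤ (1 - z) * (b ^ 2 - u ^ 2 * z) := by
        apply mul_nonneg (by linarith)
        nlinarith [hu, hz, hb2, h4]
      have key : b ^ 2 + u ^ 2 ≤ u ^ 2 * z + s := by
        nlinarith [t, h1, hz]
      have e : 2 * l0 * (((b * u⁻¹) ^ 2 + 1) / 2) = l2 * (b ^ 2 + u ^ 2) := by
        rw [hl0eq]; field_simp
      rw [e, hl0eq]
      have := mul_le_mul_of_nonneg_left key hl2.le
      linarith
  · -- M < u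
    push_neg at h6
    rcases h3.eq_or_lt with hz | hz
    · have hb0 : b = 0 := by
        have : |b| ≤ 0 := by rw [← hz] at hab; simpa using hab
        simpa using abs_nonpos_iff.mp this
      subst hb0
      simp only [abs_zero, mul_zero]
      positivity
    · have hM2 : M ^ 2 ≤ u ^ 2 := by nlinarith [h6, hM]
      have t2 : 0 ≤ u ^ 2 * z - M * |b| := by
        have c1 := mul_le_mul_of_nonneg_left hab hM.le
        have c2 := mul_le_mul_of_nonneg_right hM2 h3
        linarith
      have t1 : 0 ≤ (M * z - |b|) * (u ^ 2 * z - M * |b|) :=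
        mul_nonneg (by linarith) t2
      rw [hl0eq, show l2 * u ^ 2 / M + l2 * M = (l2 * u ^ 2 + l2 * M ^ 2) / M by
        field_simp, div_mul_eq_mul_div, div_le_iff₀ hM]
      have c1 : 0 ≤ l2 * ((M * z - |b|) * (u ^ 2 * z - M * |b|)) :=
        mul_nonneg hl2.le t1
      have c2 : 0 ≤ M * l2 * (s * z - b ^ 2) :=
        mul_nonneg (mul_nonneg hM.le hl2.le) (by linarith)
      have key : z * ((l2 * u ^ 2 * z + l2 * s) * M - (l2 * u ^ 2 + l2 * M ^ 2) * |b|)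
          = l2 * ((M * z - |b|) * (u ^ 2 * z - M * |b|)) + M * l2 * (s * z - b ^ 2) := by
        rw [← hsq]; ring
      have pos : 0 ≤ z * ((l2 * u ^ 2 * z + l2 * s) * M - (l2 * u ^ 2 + l2 * M ^ 2) * |b|) := by
        rw [key]; exact add_nonneg c1 c2
      by_contra hcon
      push_neg at hcon
      have hneg : 0 < z * ((l2 * u ^ 2 + l2 * M ^ 2) * |b| - (l2 * u ^ 2 * z + l2 * s) * M) :=
        mul_pos hz (by linarith)
      linarith

lemma keyB (l0 l2 M b : ℝ) (hl0 : 0 < l0) (hl2 : 0 < l2) (hM : 0 < M) (hb : |b| ≤ M) :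
    ∃ s z : ℝ, b ^ 2 ≤ s * z ∧ -(M * z) ≤ b ∧ b ≤ M * z ∧ 0 ≤ z ∧ z ≤ 1 ∧ 0 ≤ s ∧
      l0 * z + l2 * s = psi l0 l2 M b := by
  set u := Real.sqrt (l0 / l2) with hu_def
  have hu : 0 < u := Real.sqrt_pos.mpr (by positivity)
  have hu2 : u ^ 2 = l0 / l2 := Real.sq_sqrt (by positivity)
  have hl0eq : l0 = l2 * u ^ 2 := by rw [hu2]; field_simp
  have hinv : Real.sqrt (l2 / l0) = u⁻¹ := by
    rw [hu_def, ← Real.sqrt_inv, inv_div]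
  have hcu : Real.sqrt (l0 / l2) = u := hu_def.symm
  clear_value u
  clear hu_def hu2
  have hsq : |b| ^ 2 = b ^ 2 := sq_abs b
  have habs : |b * u⁻¹| = |b| * u⁻¹ := by rw [abs_mul, abs_inv, abs_of_pos hu]
  unfold psi
  rw [hinv, hcu]
  by_cases h6 : u ≤ M
  · rw [if_pos h6]
    unfold revHuber
    rw [habs]
    by_cases h7 : |b| * u⁻¹ ≤ 1
    · rw [if_pos h7]
      have hmb : |b| ≤ M * (|b| * u⁻¹) := by
        rw [show M * (|b| * u⁻¹) = M * |b| * u⁻¹ by ring, ← div_eq_mul_inv,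
          le_div_iff₀ hu]
        nlinarith [abs_nonneg b, h6]
      refine ⟨|b| * u, |b| * u⁻¹, ?_, ?_, ?_, by positivity, h7, by positivity, ?_⟩
      · have e : |b| * u * (|b| * u⁻¹) = b ^ 2 := by
          field_simp
          rw [← hsq]
        rw [e]
      · linarith [neg_abs_le b]
      · linarith [le_abs_self b]
      · rw [hl0eq]; field_simp; ring
    · rw [if_neg h7]
      refine ⟨b ^ 2, 1, by rw [mul_one], ?_, ?_, zero_le_one, le_refl 1,
        sq_nonneg b, ?_⟩
      · rw [mul_one]; linarith [neg_abs_le b]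
      · rw [mul_one]; linarith [le_abs_self b]
      · rw [hl0eq]; field_simp; ring
  · rw [if_neg h6]
    push_neg at h6
    have e : M * (|b| / M) = |b| := by field_simp
    refine ⟨|b| * M, |b| / M, ?_, ?_, ?_, by positivity, (div_le_one hM).mpr hb,
      by positivity, ?_⟩
    · have e2 : |b| * M * (|b| / M) = b ^ 2 := by
        field_simp; rw [← hsq]
      rw [e2]
    · rw [e]; exact neg_abs_le b
    · rw [e]; exact le_abs_self b
    · field_simp

theorem reduced_relaxation
    (n p : ℕ) (X : Matrix (Fin n) (Fin p) ℝ) (y : Fin n → ℝ)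
    (l0 l2 M : ℝ) (hl0 : 0 < l0) (hl2 : 0 < l2) (hM : 0 < M) :
    sInf {v : ℝ | ∃ β s z : Fin p → ℝ,
        (∀ i, (β i) ^ 2 ≤ s i * z i) ∧
        (∀ i, -(M * z i) ≤ β i ∧ β i ≤ M * z i) ∧
        (∀ i, 0 ≤ z i ∧ z i ≤ 1) ∧ (∀ i, 0 ≤ s i) ∧
        v = (1 / 2) * ∑ j, (y j - ∑ i, X j i * β i) ^ 2
            + l0 * ∑ i, z i + l2 * ∑ i, s i} =
      sInf {v : ℝ | ∃ β : Fin p → ℝ, (∀ i, |β i| ≤ M) ∧ v = Fobj n p X y l0 l2 M β} := by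
  set A := {v : ℝ | ∃ β s z : Fin p → ℝ,
        (∀ i, (β i) ^ 2 ≤ s i * z i) ∧
        (∀ i, -(M * z i) ≤ β i ∧ β i ≤ M * z i) ∧
        (∀ i, 0 ≤ z i ∧ z i ≤ 1) ∧ (∀ i, 0 ≤ s i) ∧
        v = (1 / 2) * ∑ j, (y j - ∑ i, X j i * β i) ^ 2
            + l0 * ∑ i, z i + l2 * ∑ i, s i} with hA
  set B := {v : ℝ | ∃ β : Fin p → ℝ, (∀ i, |β i| ≤ M) ∧ v = Fobj n p X y l0 l2 M β} with hB
  have hAne : A.Nonempty := by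
    refine ⟨_, 0, 0, 0, ?_, ?_, ?_, ?_, rfl⟩ <;> intro i <;> norm_num
  have hBne : B.Nonempty := ⟨_, 0, fun i => by simp [hM.le], rfl⟩
  have hAbdd : BddBelow A := by
    refine ⟨0, fun v hv => ?_⟩
    obtain ⟨β, s, z, h1, h2, h3, h4, rfl⟩ := hv
    have t1 : (0:ℝ) ≤ (1 / 2) * ∑ j, (y j - ∑ i, X j i * β i) ^ 2 := by positivity
    have t2 : (0:ℝ) ≤ l0 * ∑ i, z i :=
      mul_nonneg hl0.le (Finset.sum_nonneg fun i _ => (h3 i).1)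
    have t3 : (0:ℝ) ≤ l2 * ∑ i, s i :=
      mul_nonneg hl2.le (Finset.sum_nonneg fun i _ => h4 i)
    linarith
  have hBbdd : BddBelow B := by
    refine ⟨0, fun v hv => ?_⟩
    obtain ⟨β, hβ, rfl⟩ := hv
    unfold Fobj
    have t1 : (0:ℝ) ≤ (1 / 2) * ∑ j, (y j - ∑ i, X j i * β i) ^ 2 := by positivity
    have t2 : (0:ℝ) ≤ ∑ i, psi l0 l2 M (β i) :=
      Finset.sum_nonneg fun i _ => psi_nonneg l0 l2 M (β i) hl0 hl2 hM
    linarith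
  apply le_antisymm
  · apply le_csInf hBne
    rintro v ⟨β, hβ, rfl⟩
    choose s z hc using fun i => keyB l0 l2 M (β i) hl0 hl2 hM (hβ i)
    have hsum : l0 * ∑ i, z i + l2 * ∑ i, s i = ∑ i, psi l0 l2 M (β i) := by
      rw [Finset.mul_sum, Finset.mul_sum, ← Finset.sum_add_distrib]
      exact Finset.sum_congr rfl fun i _ => (hc i).2.2.2.2.2.2
    apply csInf_le hAbdd
    refine ⟨β, s, z, fun i => (hc i).1,
      fun i => ⟨(hc i).2.1, (hc i).2.2.1⟩,
      fun i => ⟨(hc i).2.2.2.1, (hc i).2.2.2.2.1⟩,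
      fun i => (hc i).2.2.2.2.2.1, ?_⟩
    unfold Fobj
    linarith [hsum]
  · apply le_csInf hAne
    rintro v ⟨β, s, z, h1, h2, h3, h4, rfl⟩
    have hβ : ∀ i, |β i| ≤ M := by
      intro i
      have := abs_le.mpr ⟨(h2 i).1, (h2 i).2⟩
      have hMz : M * z i ≤ M := by nlinarith [(h3 i).2, hM]
      linarith
    refine le_trans (csInf_le hBbdd ⟨β, hβ, rfl⟩) ?_
    unfold Fobj
    have hkey : ∑ i, psi l0 l2 M (β i) ≤ l0 * ∑ i, z i + l2 * ∑ i, s i := by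
      rw [Finset.mul_sum, Finset.mul_sum, ← Finset.sum_add_distrib]
      exact Finset.sum_le_sum fun i _ =>
        keyA l0 l2 M (β i) (s i) (z i) hl0 hl2 hM (h1 i) ((h2 i).1) ((h2 i).2)
          ((h3 i).1) ((h3 i).2) (h4 i)
    linarith
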